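/- Let S be the set of continuous functions φ: ℝ → ℂ with φ(0) = 1 and φ(-λ) = conj(φ(λ)) for all λ, and let S₀ be the set of functions of the form λ ↦ E[e^{iλX}]·e^{-imλ + σ²λ²/2} for some real random variable X and parameters m ∈ ℝ, σ ≥ 0. Then S₀ is dense in S for the topology of uniform convergence on compact sets. -/

import Mathlib

open Complex MeasureTheory Real
open scoped NNReal ENNReal

noncomputable section

/-- Per-pair Gaussian Fourier integral. -/
lemma pair_integral (sk sl τ : ℝ) (hτ : 0 < τ) (lam : ℝ) :
    ∫ x : ℝ, Complex.exp (Complex.I * lam * x) *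
      (Complex.exp ((( -(x - 2 * sk) ^ 2 / (4 * τ ^ 2) : ℝ)) : ℂ) *
       Complex.exp ((( -(x - 2 * sl) ^ 2 / (4 * τ ^ 2) : ℝ)) : ℂ))
    = (((π * (2 * τ ^ 2)) ^ ((1:ℝ)/2) : ℝ) : ℂ) *
      (Complex.exp (((-(τ ^ 2 * lam ^ 2) / 2 : ℝ)) : ℂ) *
       (Complex.exp ((( -(sk - sl) ^ 2 / (2 * τ ^ 2) : ℝ)) : ℂ) *
        Complex.exp (Complex.I * ((sk + sl : ℝ) : ℂ) * (lam : ℂ)))) := by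
  have hτ' : (τ : ℂ) ≠ 0 := by exact_mod_cast hτ.ne'
  have hkey : ∀ x : ℝ, Complex.exp (Complex.I * lam * x) *
      (Complex.exp ((( -(x - 2 * sk) ^ 2 / (4 * τ ^ 2) : ℝ)) : ℂ) *
       Complex.exp ((( -(x - 2 * sl) ^ 2 / (4 * τ ^ 2) : ℝ)) : ℂ))
      = Complex.exp ((((-(1 / (2 * τ ^ 2)) : ℝ)) : ℂ) * x ^ 2 +
        (Complex.I * lam + (((sk + sl) / τ ^ 2 : ℝ) : ℂ)) * x +
        (((-(sk ^ 2 + sl ^ 2) / τ ^ 2 : ℝ)) : ℂ)) := by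
    intro x
    rw [← Complex.exp_add, ← Complex.exp_add]
    congr 1
    push_cast
    field_simp
    ring_nf
    try ring
  have hbre : ((((-(1 / (2 * τ ^ 2)) : ℝ)) : ℂ)).re < 0 := by
    simp only [Complex.ofReal_re]
    have : (0:ℝ) < 1 / (2 * τ ^ 2) := by positivity
    linarith
  simp_rw [hkey]
  rw [integral_cexp_quadratic hbre]
  have hbase : ((π : ℂ) / -(((-(1 / (2 * τ ^ 2)) : ℝ)) : ℂ)) = ((π * (2 * τ ^ 2) : ℝ) : ℂ) := by
    push_cast
    field_simp
  rw [hbase]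
  have hpow : (((π * (2 * τ ^ 2) : ℝ)) : ℂ) ^ (1/2 : ℂ)
      = ((((π * (2 * τ ^ 2)) ^ ((1:ℝ)/2) : ℝ)) : ℂ) := by
    rw [Complex.ofReal_cpow (by positivity)]
    norm_num
  rw [hpow]
  have hc2 : (Complex.I * (lam:ℂ) + (((sk + sl) / τ ^ 2 : ℝ) : ℂ)) ^ 2
      = -((lam:ℂ))^2 + 2 * Complex.I * (lam:ℂ) * (((sk + sl) / τ ^ 2 : ℝ) : ℂ)
        + (((sk + sl) / τ ^ 2 : ℝ) : ℂ)^2 := by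
    calc (Complex.I * (lam:ℂ) + (((sk + sl) / τ ^ 2 : ℝ) : ℂ)) ^ 2
        = Complex.I^2 * (lam:ℂ)^2 + 2 * Complex.I * (lam:ℂ) * (((sk + sl) / τ ^ 2 : ℝ) : ℂ)
          + (((sk + sl) / τ ^ 2 : ℝ) : ℂ)^2 := by ring
      _ = _ := by rw [Complex.I_sq]; ring
  have hexp2 : ((((-(sk ^ 2 + sl ^ 2) / τ ^ 2 : ℝ))) : ℂ) -
      (Complex.I * (lam:ℂ) + (((sk + sl) / τ ^ 2 : ℝ) : ℂ)) ^ 2 /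
        (4 * (((-(1 / (2 * τ ^ 2)) : ℝ)) : ℂ))
      = (((-(τ ^ 2 * lam ^ 2) / 2 : ℝ)) : ℂ) + ((( -(sk - sl) ^ 2 / (2 * τ ^ 2) : ℝ)) : ℂ)
        + Complex.I * ((sk + sl : ℝ) : ℂ) * (lam : ℂ) := by
    rw [hc2]
    push_cast
    field_simp
    ring_nf
    try ring
  rw [hexp2, Complex.exp_add, Complex.exp_add]
  ring

lemma pair_integrable (sk sl τ : ℝ) (hτ : 0 < τ) (lam : ℝ) :
    Integrable (fun x : ℝ => Complex.exp (Complex.I * lam * x) *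
      (Complex.exp ((( -(x - 2 * sk) ^ 2 / (4 * τ ^ 2) : ℝ)) : ℂ) *
       Complex.exp ((( -(x - 2 * sl) ^ 2 / (4 * τ ^ 2) : ℝ)) : ℂ))) := by
  have hτ' : (τ : ℂ) ≠ 0 := by exact_mod_cast hτ.ne'
  have hbre : ((((-(1 / (2 * τ ^ 2)) : ℝ)) : ℂ)).re < 0 := by
    simp only [Complex.ofReal_re]
    have : (0:ℝ) < 1 / (2 * τ ^ 2) := by positivity
    linarith
  have hkey : ∀ x : ℝ, Complex.exp (Complex.I * lam * x) *
      (Complex.exp ((( -(x - 2 * sk) ^ 2 / (4 * τ ^ 2) : ℝ)) : ℂ) *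
       Complex.exp ((( -(x - 2 * sl) ^ 2 / (4 * τ ^ 2) : ℝ)) : ℂ))
      = Complex.exp ((((-(1 / (2 * τ ^ 2)) : ℝ)) : ℂ) * x ^ 2 +
        (Complex.I * lam + (((sk + sl) / τ ^ 2 : ℝ) : ℂ)) * x +
        (((-(sk ^ 2 + sl ^ 2) / τ ^ 2 : ℝ)) : ℂ)) := by
    intro x
    rw [← Complex.exp_add, ← Complex.exp_add]
    congr 1
    push_cast
    field_simp
    ring_nf
    try ring
  rw [show (fun x : ℝ => Complex.exp (Complex.I * lam * x) *
      (Complex.exp ((( -(x - 2 * sk) ^ 2 / (4 * τ ^ 2) : ℝ)) : ℂ) *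
       Complex.exp ((( -(x - 2 * sl) ^ 2 / (4 * τ ^ 2) : ℝ)) : ℂ))) = fun x : ℝ =>
      Complex.exp ((((-(1 / (2 * τ ^ 2)) : ℝ)) : ℂ) * x ^ 2 +
        (Complex.I * lam + (((sk + sl) / τ ^ 2 : ℝ) : ℂ)) * x +
        (((-(sk ^ 2 + sl ^ 2) / τ ^ 2 : ℝ)) : ℂ)) from funext hkey]
  exact integrable_cexp_quadratic' hbre _ _

lemma realization {n : ℕ} (a : Fin n → ℂ) (s : Fin n → ℝ) (τ : ℝ) (hτ : 0 < τ)
    (N : ℝ → ℂ)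
    (hN : ∀ lam : ℝ, N lam = ∑ k : Fin n, ∑ l : Fin n, a k * (starRingEnd ℂ) (a l)
        * Complex.exp ((( -(s k - s l) ^ 2 / (2 * τ ^ 2) : ℝ)) : ℂ)
        * Complex.exp (Complex.I * ((s k + s l : ℝ) : ℂ) * (lam : ℂ)))
    (hpos : 0 < (N 0).re) :
    ∃ μ : Measure ℝ, IsProbabilityMeasure μ ∧ ∀ lam : ℝ,
      (∫ x : ℝ, Complex.exp (Complex.I * lam * x) ∂μ) *
        Complex.exp (-Complex.I * ((0:ℝ) : ℂ) * (lam : ℂ) + ((τ:ℝ) : ℂ) ^ 2 * ((lam:ℝ) : ℂ) ^ 2 / 2)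
        = N lam / (((N 0).re : ℝ) : ℂ) := by
  -- the L² function
  set g : Fin n → ℝ → ℂ := fun k x => Complex.exp ((( -(x - 2 * s k) ^ 2 / (4 * τ ^ 2) : ℝ)) : ℂ)
    with hg
  set f : ℝ → ℂ := fun x => ∑ k : Fin n, a k * g k x with hf
  set κ : ℝ := (π * (2 * τ ^ 2)) ^ ((1:ℝ)/2) with hκ
  have hκpos : 0 < κ := Real.rpow_pos_of_pos (by positivity) _
  -- conj of f
  have hconj : ∀ x : ℝ, (starRingEnd ℂ) (f x)
      = ∑ l : Fin n, (starRingEnd ℂ) (a l) * g l x := by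
    intro x
    rw [hf]
    simp only [map_sum, map_mul]
    congr 1
    funext l
    congr 1
    rw [hg]
    simp only [← Complex.exp_conj, Complex.conj_ofReal]
  -- expansion of the integrand
  have hexpand : ∀ (lam x : ℝ), Complex.exp (Complex.I * lam * x) * (f x * (starRingEnd ℂ) (f x))
      = ∑ k : Fin n, ∑ l : Fin n, (a k * (starRingEnd ℂ) (a l))
          * (Complex.exp (Complex.I * lam * x) * (g k x * g l x)) := by
    intro lam x
    rw [hconj, hf]
    rw [Finset.sum_mul_sum]
    rw [Finset.mul_sum]
    refine Finset.sum_congr rfl fun k _ => ?_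
    rw [Finset.mul_sum]
    refine Finset.sum_congr rfl fun l _ => ?_
    ring
  -- the key integral identity
  have key : ∀ lam : ℝ, (∫ x : ℝ, Complex.exp (Complex.I * lam * x) * (f x * (starRingEnd ℂ) (f x)))
      = (κ : ℂ) * Complex.exp (((-(τ ^ 2 * lam ^ 2) / 2 : ℝ)) : ℂ) * N lam := by
    intro lam
    simp_rw [hexpand lam]
    rw [integral_finset_sum _ (fun k _ => integrable_finset_sum _
      (fun l _ => ((pair_integrable (s k) (s l) τ hτ lam).const_mul _)))]
    have : ∀ k : Fin n, (∫ x : ℝ, ∑ l : Fin n, (a k * (starRingEnd ℂ) (a l))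
          * (Complex.exp (Complex.I * lam * x) * (g k x * g l x)))
        = ∑ l : Fin n, (a k * (starRingEnd ℂ) (a l)) *
            ((κ : ℂ) * (Complex.exp (((-(τ ^ 2 * lam ^ 2) / 2 : ℝ)) : ℂ) *
             (Complex.exp ((( -(s k - s l) ^ 2 / (2 * τ ^ 2) : ℝ)) : ℂ) *
              Complex.exp (Complex.I * ((s k + s l : ℝ) : ℂ) * (lam : ℂ))))) := by
      intro k
      rw [integral_finset_sum _ (fun l _ => ((pair_integrable (s k) (s l) τ hτ lam).const_mul _))]
      refine Finset.sum_congr rfl fun l _ => ?_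
      rw [MeasureTheory.integral_const_mul]
      congr 1
      exact pair_integral (s k) (s l) τ hτ lam
    refine (Finset.sum_congr rfl fun k _ => this k).trans ?_
    rw [hN lam]
    rw [Finset.mul_sum]
    refine Finset.sum_congr rfl fun k _ => ?_
    rw [Finset.mul_sum]
    refine Finset.sum_congr rfl fun l _ => ?_
    ring
  -- integrability of f * conj f
  have hfc_int : Integrable (fun x : ℝ => f x * (starRingEnd ℂ) (f x)) := by
    have h1 : Integrable (fun x : ℝ =>
        Complex.exp (Complex.I * (0:ℝ) * x) * (f x * (starRingEnd ℂ) (f x))) := by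
      rw [funext (hexpand 0)]
      exact integrable_finset_sum _ (fun k _ => integrable_finset_sum _
        (fun l _ => ((pair_integrable (s k) (s l) τ hτ 0).const_mul _)))
    refine h1.congr (Filter.Eventually.of_forall fun x => ?_)
    simp
  have hnormSq : ∀ x : ℝ, f x * (starRingEnd ℂ) (f x) = ((Complex.normSq (f x) : ℝ) : ℂ) :=
    fun x => Complex.mul_conj (f x)
  set Z : ℝ := ∫ x : ℝ, Complex.normSq (f x) with hZdef
  have hZint : Integrable (fun x : ℝ => Complex.normSq (f x)) := by
    refine hfc_int.re.congr (Filter.Eventually.of_forall fun x => ?_)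
    beta_reduce
    rw [hnormSq x]
    simp
  have hZc : (∫ x : ℝ, Complex.exp (Complex.I * (0:ℝ) * x) * (f x * (starRingEnd ℂ) (f x)))
      = ((Z:ℝ):ℂ) := by
    calc (∫ x : ℝ, Complex.exp (Complex.I * (0:ℝ) * x) * (f x * (starRingEnd ℂ) (f x)))
        = ∫ x : ℝ, ((Complex.normSq (f x) : ℝ):ℂ) := by
          refine integral_congr_ae (Filter.Eventually.of_forall fun x => ?_)
          beta_reduce
          rw [show Complex.I * ((0:ℝ):ℂ) * (x:ℂ) = 0 by simp, Complex.exp_zero, one_mul,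
            hnormSq x]
      _ = ((Z:ℝ):ℂ) := integral_ofReal
  have hZκ : ((Z:ℝ):ℂ) = (κ:ℂ) * N 0 := by
    rw [← hZc, key 0]
    rw [show (-(τ^2*(0:ℝ)^2)/2 : ℝ) = 0 by ring, Complex.ofReal_zero, Complex.exp_zero, mul_one]
  have hκc : ((κ:ℝ):ℂ) ≠ 0 := by exact_mod_cast hκpos.ne'
  have hN0 : N 0 = ((Z / κ : ℝ) : ℂ) := by
    rw [Complex.ofReal_div, hZκ, mul_div_cancel_left₀ _ hκc]
  have hrN : (((N 0).re : ℝ) : ℂ) = N 0 := by rw [hN0]; simp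
  have hre0 : (N 0).re = Z / κ := by rw [hN0]; simp
  have hZval : Z = κ * (N 0).re := by rw [hre0]; field_simp
  have hZpos : 0 < Z := by rw [hZval]; exact mul_pos hκpos hpos
  -- the measure
  have hf_cont : Continuous f := by
    rw [hf]
    refine continuous_finset_sum _ fun k _ => continuous_const.mul ?_
    exact Complex.continuous_exp.comp (Complex.continuous_ofReal.comp (by fun_prop))
  have hdens_meas : Measurable fun x : ℝ => Complex.normSq (f x) / Z :=
    ((Complex.continuous_normSq.comp hf_cont).measurable).div_const _
  have hdens_nonneg : ∀ x : ℝ, 0 ≤ Complex.normSq (f x) / Z :=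
    fun x => div_nonneg (Complex.normSq_nonneg _) hZpos.le
  set μ : Measure ℝ := volume.withDensity
    (fun x => ENNReal.ofReal (Complex.normSq (f x) / Z)) with hμ
  have hprob : IsProbabilityMeasure μ := by
    constructor
    rw [hμ, withDensity_apply _ MeasurableSet.univ, setLIntegral_univ]
    rw [← MeasureTheory.ofReal_integral_eq_lintegral_ofReal (hZint.div_const Z)
      (Filter.Eventually.of_forall hdens_nonneg)]
    rw [integral_div, div_self hZpos.ne', ENNReal.ofReal_one]
  refine ⟨μ, hprob, fun lam => ?_⟩
  have hsmul : ∀ x : ℝ, (Real.toNNReal (Complex.normSq (f x) / Z) : ℝ≥0)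
        • Complex.exp (Complex.I * lam * x)
      = (Complex.exp (Complex.I * lam * x) * (f x * (starRingEnd ℂ) (f x))) / ((Z:ℝ):ℂ) := by
    intro x
    rw [NNReal.smul_def, Real.coe_toNNReal _ (hdens_nonneg x), Complex.real_smul, hnormSq x]
    push_cast
    ring
  have hchar : (∫ x : ℝ, Complex.exp (Complex.I * lam * x) ∂μ)
      = (κ:ℂ) * Complex.exp (((-(τ ^ 2 * lam ^ 2) / 2 : ℝ)) : ℂ) * N lam / ((Z:ℝ):ℂ) := by
    rw [hμ]
    rw [show (fun x : ℝ => ENNReal.ofReal (Complex.normSq (f x) / Z)) = fun x : ℝ =>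
      ((Real.toNNReal (Complex.normSq (f x) / Z) : ℝ≥0) : ℝ≥0∞) from rfl]
    rw [integral_withDensity_eq_integral_smul (hdens_meas.real_toNNReal) _]
    rw [show (fun x : ℝ => (Real.toNNReal (Complex.normSq (f x) / Z) : ℝ≥0)
        • Complex.exp (Complex.I * lam * x)) = fun x : ℝ =>
        (Complex.exp (Complex.I * lam * x) * (f x * (starRingEnd ℂ) (f x))) / ((Z:ℝ):ℂ) from
      funext hsmul]
    rw [integral_div, key lam]
  rw [hchar]
  have hcancel : Complex.exp (((-(τ ^ 2 * lam ^ 2) / 2 : ℝ)) : ℂ) *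
      Complex.exp (-Complex.I * ((0:ℝ):ℂ) * (lam:ℂ) + ((τ:ℝ):ℂ)^2 * ((lam:ℝ):ℂ)^2/2) = 1 := by
    rw [← Complex.exp_add, ← Complex.exp_zero]
    congr 1
    push_cast
    ring
  have hZc2 : ((Z:ℝ):ℂ) = ((κ:ℝ):ℂ) * (((N 0).re : ℝ):ℂ) := by
    rw [hZval]; push_cast; ring
  rw [div_mul_eq_mul_div]
  rw [show (κ:ℂ) * Complex.exp (((-(τ ^ 2 * lam ^ 2) / 2 : ℝ)) : ℂ) * N lam *
      Complex.exp (-Complex.I * ((0:ℝ):ℂ) * (lam:ℂ) + ((τ:ℝ):ℂ)^2 * ((lam:ℝ):ℂ)^2/2)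
      = (κ:ℂ) * N lam * (Complex.exp (((-(τ ^ 2 * lam ^ 2) / 2 : ℝ)) : ℂ) *
        Complex.exp (-Complex.I * ((0:ℝ):ℂ) * (lam:ℂ) + ((τ:ℝ):ℂ)^2 * ((lam:ℝ):ℂ)^2/2)) by ring,
    hcancel, mul_one, hZc2]
  rw [mul_div_mul_left _ _ hκc]


lemma trig_dense (T : ℝ) (hT : 0 < T) (G : ℝ → ℂ) (hG : Continuous G)
    (ε₁ : ℝ) (hε₁ : 0 < ε₁) :
    ∃ (n : ℕ) (c : Fin n → ℂ) (t : Fin n → ℝ), ∀ lam ∈ Set.Icc (-T) T,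
      ‖(∑ i : Fin n, c i * Complex.exp (Complex.I * t i * lam)) - G lam‖ < ε₁ := by
  set X := Set.Icc (-T) T with hX
  haveI : CompactSpace X := isCompact_iff_compactSpace.mp isCompact_Icc
  -- the exponential functions
  set e : ℝ → C(X, ℂ) := fun t =>
    ⟨fun x => Complex.exp (Complex.I * t * ((x : ℝ) : ℂ)),
      Complex.continuous_exp.comp
        ((continuous_const.mul (Complex.continuous_ofReal.comp continuous_subtype_val)))⟩ with he
  have he_apply : ∀ (t : ℝ) (x : X), e t x = Complex.exp (Complex.I * t * ((x : ℝ) : ℂ)) :=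
    fun t x => rfl
  have hmul : ∀ t u : ℝ, e t * e u = e (t + u) := by
    intro t u
    ext x
    simp only [ContinuousMap.mul_apply, he_apply]
    rw [← Complex.exp_add]
    congr 1
    push_cast
    ring
  have hone : e 0 = 1 := by
    ext x
    simp [he_apply]
  have hstar : ∀ t : ℝ, star (e t) = e (-t) := by
    intro t
    ext x
    simp only [ContinuousMap.star_apply, he_apply]
    rw [show (star (Complex.exp (Complex.I * t * ((x : ℝ) : ℂ))) : ℂ)
      = (starRingEnd ℂ) (Complex.exp (Complex.I * t * ((x : ℝ) : ℂ))) from rfl]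
    rw [← Complex.exp_conj]
    congr 1
    rw [map_mul, map_mul, Complex.conj_I, Complex.conj_ofReal, Complex.conj_ofReal]
    push_cast
    ring
  set V : Submodule ℂ C(X, ℂ) := Submodule.span ℂ (Set.range e) with hV
  have hVle : V * V ≤ V := by
    rw [hV, Submodule.span_mul_span]
    apply Submodule.span_le.2
    rintro z ⟨f1, ⟨t1, rfl⟩, f2, ⟨t2, rfl⟩, rfl⟩
    show e t1 * e t2 ∈ (Submodule.span ℂ (Set.range e) : Set C(X, ℂ))
    rw [hmul t1 t2]
    exact Submodule.subset_span ⟨t1 + t2, rfl⟩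
  have hVone : (1 : C(X, ℂ)) ∈ V := hone ▸ Submodule.subset_span ⟨0, rfl⟩
  have hVstar : ∀ g ∈ V, star g ∈ V := by
    intro g hg
    refine Submodule.span_induction ?_ ?_ ?_ ?_ hg
    · rintro f ⟨t, rfl⟩
      rw [hstar t]
      exact Submodule.subset_span ⟨-t, rfl⟩
    · simpa using Submodule.zero_mem V
    · intro f1 f2 _ _ h1 h2
      rw [star_add]
      exact Submodule.add_mem V h1 h2
    · intro cc f _ h1
      rw [star_smul]
      exact Submodule.smul_mem V _ h1
  set A : StarSubalgebra ℂ C(X, ℂ) :=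
    { toSubalgebra := V.toSubalgebra hVone
        (fun x y hx hy => hVle (Submodule.mul_mem_mul hx hy))
      star_mem' := fun {g} hg => hVstar g hg } with hA
  have hmemA : ∀ t : ℝ, e t ∈ A := fun t => Submodule.subset_span ⟨t, rfl⟩
  have hsep : A.SeparatesPoints := by
    intro x y hxy
    have hxy' : (x : ℝ) ≠ (y : ℝ) := fun h => hxy (Subtype.ext h)
    have hd : (x : ℝ) - (y : ℝ) ≠ 0 := sub_ne_zero.2 hxy'
    set t : ℝ := π / ((x : ℝ) - (y : ℝ)) with ht
    refine ⟨_, ⟨e t, hmemA t, rfl⟩, ?_⟩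
    simp only [he_apply]
    intro h
    have hdC : (((x : ℝ) : ℂ)) - (((y : ℝ) : ℂ)) ≠ 0 := by
      rw [show (((x : ℝ) : ℂ)) - (((y : ℝ) : ℂ)) = (((x : ℝ) - (y : ℝ) : ℝ) : ℂ) by push_cast; ring]
      exact_mod_cast hd
    have harg : Complex.I * t * ((x : ℝ) : ℂ) = Complex.I * t * ((y : ℝ) : ℂ) + π * Complex.I := by
      rw [ht]
      push_cast
      field_simp
      ring
    rw [harg, Complex.exp_add, Complex.exp_pi_mul_I] at h
    have h2 : (2 : ℂ) * Complex.exp (Complex.I * t * ((y : ℝ) : ℂ)) = 0 := by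
      linear_combination -h
    have := Complex.exp_ne_zero (Complex.I * t * ((y : ℝ) : ℂ))
    exact this (by
      have h3 := mul_eq_zero.1 h2
      rcases h3 with h3 | h3
      · norm_num at h3
      · exact h3)
  have htop := ContinuousMap.starSubalgebra_topologicalClosure_eq_top_of_separatesPoints A hsep
  set GX : C(X, ℂ) := ⟨fun x => G (x : ℝ), hG.comp continuous_subtype_val⟩ with hGX
  have hmem : GX ∈ A.topologicalClosure := by
    rw [htop]
    trivial
  have hclos : GX ∈ closure (A : Set C(X, ℂ)) := hmem
  obtain ⟨g, hgA, hdist⟩ := Metric.mem_closure_iff.1 hclos ε₁ hε₁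
  have hgV : g ∈ V := hgA
  obtain ⟨n, c, v, hsum⟩ := Submodule.mem_span_set'.1 hgV
  have hvt : ∀ i : Fin n, ∃ t : ℝ, e t = (v i : C(X, ℂ)) := fun i => (v i).2
  choose t ht using hvt
  refine ⟨n, c, t, fun lam hlam => ?_⟩
  set xl : X := ⟨lam, hlam⟩ with hxl
  have hgxl : g xl = ∑ i : Fin n, c i * Complex.exp (Complex.I * t i * lam) := by
    rw [← hsum]
    rw [ContinuousMap.sum_apply]
    refine Finset.sum_congr rfl fun i _ => ?_
    rw [ContinuousMap.smul_apply, ← ht i, he_apply]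
    simp [smul_eq_mul]
    exact Or.inl rfl
  have hGxl : GX xl = G lam := rfl
  calc ‖(∑ i : Fin n, c i * Complex.exp (Complex.I * t i * lam)) - G lam‖
      = dist (g xl) (GX xl) := by rw [dist_eq_norm, hgxl, hGxl]
    _ ≤ dist g GX := ContinuousMap.dist_apply_le_dist xl
    _ < ε₁ := by rwa [dist_comm] at hdist


theorem S0_dense_in_S (φ : ℝ → ℂ) (hcont : Continuous φ) (h0 : φ 0 = 1)
    (hsym : ∀ lam : ℝ, φ (-lam) = starRingEnd ℂ (φ lam)) :
    ∀ K : Set ℝ, IsCompact K → ∀ ε > 0,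
      ∃ μ : Measure ℝ, IsProbabilityMeasure μ ∧ ∃ m σ : ℝ, 0 ≤ σ ∧
        ∀ lam ∈ K,
          ‖(∫ x : ℝ, Complex.exp (Complex.I * lam * x) ∂μ) *
              Complex.exp (-Complex.I * m * lam + σ ^ 2 * lam ^ 2 / 2) - φ lam‖ < ε := by
  intro K hK ε hε
  -- a symmetric compact interval containing K and 0
  obtain ⟨T0, hT0⟩ := hK.isBounded.subset_closedBall 0
  set T : ℝ := max T0 1 with hTdef
  have hT : 0 < T := lt_of_lt_of_le one_pos (le_max_right _ _)
  have hT1 : 1 ≤ T := le_max_right _ _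
  have hKT : K ⊆ Set.Icc (-T) T := by
    intro x hx
    have h1 := hT0 hx
    rw [Real.closedBall_eq_Icc] at h1
    refine ⟨?_, ?_⟩
    · have := h1.1; have h2 : T0 ≤ T := le_max_left _ _; simp at this ⊢; linarith
    · have := h1.2; have h2 : T0 ≤ T := le_max_left _ _; simp at this; linarith
  have h0T : (0:ℝ) ∈ Set.Icc (-T) T := ⟨by linarith, by linarith⟩
  have hnegT : ∀ lam ∈ Set.Icc (-T) T, -lam ∈ Set.Icc (-T) T := by
    rintro lam ⟨h1, h2⟩; exact ⟨by linarith, by linarith⟩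
  -- the function G with φ lam = G lam * conj (G (-lam))
  set G : ℝ → ℂ := fun lam => φ (max lam 0) with hG
  have hGcont : Continuous G := hcont.comp (continuous_id.max continuous_const)
  have hGfact : ∀ lam : ℝ, G lam * (starRingEnd ℂ) (G (-lam)) = φ lam := by
    intro lam
    rcases le_total 0 lam with h | h
    · have h1 : max lam 0 = lam := max_eq_left h
      have h2 : max (-lam) 0 = 0 := max_eq_right (neg_nonpos.2 h)
      simp only [hG, h1, h2, h0, map_one, mul_one]
    · have h1 : max lam 0 = 0 := max_eq_right h
      have h2 : max (-lam) 0 = -lam := max_eq_left (neg_nonneg.2 h)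
      simp only [hG, h1, h2, h0, one_mul]
      rw [hsym lam, Complex.conj_conj]
  -- bound for φ on the interval
  obtain ⟨M0, hM0⟩ := (isCompact_Icc (a := -T) (b := T)).exists_bound_of_continuousOn
    hcont.continuousOn
  set M : ℝ := max M0 1 with hMdef
  have hM1 : 1 ≤ M := le_max_right _ _
  have hMpos : 0 < M := lt_of_lt_of_le one_pos hM1
  have hMb : ∀ lam ∈ Set.Icc (-T) T, ‖φ lam‖ ≤ M :=
    fun lam hlam => le_trans (hM0 lam hlam) (le_max_left _ _)
  have hGb : ∀ lam ∈ Set.Icc (-T) T, ‖G lam‖ ≤ M := by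
    intro lam hlam
    apply hMb
    rcases le_total 0 lam with h | h
    · rw [max_eq_left h]; exact hlam
    · rw [max_eq_right h]; exact h0T
  -- numerical parameters
  set δ : ℝ := min (1/4) (ε / (8 * (M + 1))) with hδdef
  have hδpos : 0 < δ := lt_min (by norm_num) (by positivity)
  have hδ14 : δ ≤ 1/4 := min_le_left _ _
  have hδε : δ ≤ ε / (8 * (M + 1)) := min_le_right _ _
  set ε₁ : ℝ := min 1 (δ / (2 * M + 2)) with hε₁def
  have hε₁pos : 0 < ε₁ := lt_min one_pos (by positivity)
  have hε₁le1 : ε₁ ≤ 1 := min_le_left _ _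
  have hε₁δ : ε₁ ≤ δ / (2 * M + 2) := min_le_right _ _
  -- Stone-Weierstrass approximation of G
  obtain ⟨n, c, t, hst⟩ := trig_dense T hT G hGcont ε₁ hε₁pos
  set S : ℝ → ℂ := fun lam => ∑ i : Fin n, c i * Complex.exp (Complex.I * t i * lam) with hS
  have hSb : ∀ lam ∈ Set.Icc (-T) T, ‖S lam‖ ≤ M + 1 := by
    intro lam hlam
    calc ‖S lam‖ = ‖(S lam - G lam) + G lam‖ := by congr 1; ring
      _ ≤ ‖S lam - G lam‖ + ‖G lam‖ := norm_add_le _ _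
      _ ≤ ε₁ + M := add_le_add (le_of_lt (hst lam hlam)) (hGb lam hlam)
      _ ≤ M + 1 := by linarith
  -- the product S(lam) * conj (S(-lam)) approximates φ on the interval
  have hSdiff : ∀ lam ∈ Set.Icc (-T) T,
      ‖S lam * (starRingEnd ℂ) (S (-lam)) - φ lam‖ ≤ δ := by
    intro lam hlam
    have hneg := hnegT lam hlam
    have h1 : S lam * (starRingEnd ℂ) (S (-lam)) - φ lam
        = S lam * ((starRingEnd ℂ) (S (-lam)) - (starRingEnd ℂ) (G (-lam)))
          + (S lam - G lam) * (starRingEnd ℂ) (G (-lam)) := by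
      rw [← hGfact lam]; ring
    rw [h1]
    have h2 : ‖(starRingEnd ℂ) (S (-lam)) - (starRingEnd ℂ) (G (-lam))‖
        = ‖S (-lam) - G (-lam)‖ := by
      rw [← map_sub]
      exact norm_star _
    calc ‖S lam * ((starRingEnd ℂ) (S (-lam)) - (starRingEnd ℂ) (G (-lam)))
          + (S lam - G lam) * (starRingEnd ℂ) (G (-lam))‖
        ≤ ‖S lam‖ * ‖(starRingEnd ℂ) (S (-lam)) - (starRingEnd ℂ) (G (-lam))‖
          + ‖S lam - G lam‖ * ‖(starRingEnd ℂ) (G (-lam))‖ := by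
          refine le_trans (norm_add_le _ _) ?_
          rw [norm_mul, norm_mul]
      _ ≤ (M + 1) * ε₁ + ε₁ * M := by
          have h3 : ‖(starRingEnd ℂ) (G (-lam))‖ = ‖G (-lam)‖ := norm_star _
          rw [h2, h3]
          have := hst (-lam) hneg
          have := hst lam hlam
          have := hSb lam hlam
          have := hGb (-lam) hneg
          have hs1 : ‖S (-lam) - G (-lam)‖ ≤ ε₁ := le_of_lt (hst (-lam) hneg)
          have hs2 : ‖S lam - G lam‖ ≤ ε₁ := le_of_lt (hst lam hlam)
          have h4 : (0:ℝ) ≤ ‖S lam‖ := norm_nonneg _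
          have h5 : (0:ℝ) ≤ ‖S lam - G lam‖ := norm_nonneg _
          apply add_le_add
          · exact mul_le_mul (hSb lam hlam) hs1 (norm_nonneg _) (by linarith)
          · exact mul_le_mul hs2 (hGb (-lam) hneg) (norm_nonneg _) (by positivity)
      _ ≤ δ := by
          have h6 : (M + 1) * ε₁ + ε₁ * M = ε₁ * (2 * M + 1) := by ring
          rw [h6]
          have h7 : ε₁ * (2 * M + 1) ≤ (δ / (2 * M + 2)) * (2 * M + 2) := by
            apply mul_le_mul hε₁δ (by linarith) (by linarith) (by positivity)
          rw [div_mul_cancel₀] at h7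
          · exact h7
          · positivity
  -- choose τ
  set C : ℝ := ∑ k : Fin n, ∑ l : Fin n, ‖c k‖ * ‖c l‖ * (t k - t l) ^ 2 / 2 with hC
  have hCnonneg : 0 ≤ C := by
    apply Finset.sum_nonneg; intro k _
    apply Finset.sum_nonneg; intro l _
    positivity
  set τ : ℝ := max 1 (Real.sqrt (C / δ)) with hτdef
  have hτpos : (0:ℝ) < τ := lt_of_lt_of_le one_pos (le_max_left _ _)
  have hτsq : C / τ ^ 2 ≤ δ := by
    have h1 : Real.sqrt (C / δ) ≤ τ := le_max_right _ _
    have h2 : C / δ ≤ τ ^ 2 := by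
      have h3 := Real.sq_sqrt (by positivity : (0:ℝ) ≤ C / δ)
      nlinarith [Real.sqrt_nonneg (C / δ)]
    rw [div_le_iff₀ (by positivity)]
    rw [div_le_iff₀ hδpos] at h2
    linarith
  -- the function N
  set Nf : ℝ → ℂ := fun lam => ∑ k : Fin n, ∑ l : Fin n, c k * (starRingEnd ℂ) (c l)
      * Complex.exp ((( -(t k - t l) ^ 2 / (2 * τ ^ 2) : ℝ)) : ℂ)
      * Complex.exp (Complex.I * ((t k + t l : ℝ) : ℂ) * (lam : ℂ)) with hNf
  -- N approximates the product S * conj S ∘ neg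
  have hphase : ∀ (u lam : ℝ), ‖Complex.exp (Complex.I * (u : ℂ) * (lam : ℂ))‖ = 1 := by
    intro u lam
    rw [show Complex.I * (u : ℂ) * (lam : ℂ) = ((u * lam : ℝ) : ℂ) * Complex.I by push_cast; ring]
    rw [Complex.norm_exp_ofReal_mul_I]
  have hSprod : ∀ lam : ℝ, S lam * (starRingEnd ℂ) (S (-lam))
      = ∑ k : Fin n, ∑ l : Fin n, c k * (starRingEnd ℂ) (c l)
        * Complex.exp (Complex.I * ((t k + t l : ℝ) : ℂ) * (lam : ℂ)) := by
    intro lam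
    rw [hS]
    simp only [map_sum, map_mul]
    rw [Finset.sum_mul_sum]
    refine Finset.sum_congr rfl fun k _ => ?_
    refine Finset.sum_congr rfl fun l _ => ?_
    rw [show (starRingEnd ℂ) (Complex.exp (Complex.I * (t l : ℂ) * ((-lam : ℝ) : ℂ)))
      = Complex.exp ((starRingEnd ℂ) (Complex.I * (t l : ℂ) * ((-lam : ℝ) : ℂ))) from
        (Complex.exp_conj _).symm]
    rw [show (starRingEnd ℂ) (Complex.I * (t l : ℂ) * ((-lam : ℝ) : ℂ))
        = Complex.I * (t l : ℂ) * (lam : ℂ) by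
      rw [map_mul, map_mul, Complex.conj_I, Complex.conj_ofReal, Complex.conj_ofReal]
      push_cast; ring]
    have hcomb : Complex.exp (Complex.I * (t k : ℂ) * (lam : ℂ))
        * Complex.exp (Complex.I * (t l : ℂ) * (lam : ℂ))
        = Complex.exp (Complex.I * ((t k + t l : ℝ) : ℂ) * (lam : ℂ)) := by
      rw [← Complex.exp_add]
      congr 1
      push_cast
      ring
    calc c k * Complex.exp (Complex.I * (t k : ℂ) * (lam : ℂ))
          * ((starRingEnd ℂ) (c l) * Complex.exp (Complex.I * (t l : ℂ) * (lam : ℂ)))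
        = c k * (starRingEnd ℂ) (c l) * (Complex.exp (Complex.I * (t k : ℂ) * (lam : ℂ))
            * Complex.exp (Complex.I * (t l : ℂ) * (lam : ℂ))) := by ring
      _ = c k * (starRingEnd ℂ) (c l)
            * Complex.exp (Complex.I * ((t k + t l : ℝ) : ℂ) * (lam : ℂ)) := by rw [hcomb]
  have hNS : ∀ lam : ℝ, ‖Nf lam - S lam * (starRingEnd ℂ) (S (-lam))‖ ≤ δ := by
    intro lam
    rw [hSprod lam, hNf]
    simp only [← Finset.sum_sub_distrib]
    refine le_trans (norm_sum_le _ _) ?_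
    have hterm : ∀ k : Fin n, ‖∑ l : Fin n, (c k * (starRingEnd ℂ) (c l)
        * Complex.exp ((( -(t k - t l) ^ 2 / (2 * τ ^ 2) : ℝ)) : ℂ)
        * Complex.exp (Complex.I * ((t k + t l : ℝ) : ℂ) * (lam : ℂ))
        - c k * (starRingEnd ℂ) (c l)
        * Complex.exp (Complex.I * ((t k + t l : ℝ) : ℂ) * (lam : ℂ)))‖
        ≤ ∑ l : Fin n, ‖c k‖ * ‖c l‖ * ((t k - t l) ^ 2 / (2 * τ ^ 2)) := by
      intro k
      refine le_trans (norm_sum_le _ _) ?_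
      apply Finset.sum_le_sum
      intro l _
      have heq : c k * (starRingEnd ℂ) (c l)
          * Complex.exp ((( -(t k - t l) ^ 2 / (2 * τ ^ 2) : ℝ)) : ℂ)
          * Complex.exp (Complex.I * ((t k + t l : ℝ) : ℂ) * (lam : ℂ))
          - c k * (starRingEnd ℂ) (c l)
          * Complex.exp (Complex.I * ((t k + t l : ℝ) : ℂ) * (lam : ℂ))
          = c k * (starRingEnd ℂ) (c l)
            * (Complex.exp ((( -(t k - t l) ^ 2 / (2 * τ ^ 2) : ℝ)) : ℂ) - 1)
            * Complex.exp (Complex.I * ((t k + t l : ℝ) : ℂ) * (lam : ℂ)) := by ring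
      rw [heq]
      rw [norm_mul, norm_mul, norm_mul, hphase, mul_one]
      have hconj : ‖(starRingEnd ℂ) (c l)‖ = ‖c l‖ := norm_star _
      rw [hconj]
      have hw : ‖Complex.exp ((( -(t k - t l) ^ 2 / (2 * τ ^ 2) : ℝ)) : ℂ) - 1‖
          ≤ (t k - t l) ^ 2 / (2 * τ ^ 2) := by
        set w : ℝ := -(t k - t l) ^ 2 / (2 * τ ^ 2) with hw'
        have hwle : w ≤ 0 := by
          rw [hw']
          apply div_nonpos_of_nonpos_of_nonneg
          · simp [sq_nonneg]
          · positivity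
        have h1 : Complex.exp ((w : ℝ) : ℂ) - 1 = ((Real.exp w - 1 : ℝ) : ℂ) := by
          rw [← Complex.ofReal_exp]; push_cast; ring
        rw [h1, Complex.norm_real]
        rw [Real.norm_eq_abs, abs_of_nonpos (by nlinarith [Real.exp_le_one_iff.2 hwle] : Real.exp w - 1 ≤ 0)]
        have h2 : w + 1 ≤ Real.exp w := Real.add_one_le_exp w
        have h3 : -w = (t k - t l) ^ 2 / (2 * τ ^ 2) := by rw [hw']; ring
        linarith [h2, h3.symm.le]
      exact mul_le_mul_of_nonneg_left hw (by positivity)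
    refine le_trans (Finset.sum_le_sum fun k _ => hterm k) ?_
    have heqC : ∑ k : Fin n, ∑ l : Fin n, ‖c k‖ * ‖c l‖ * ((t k - t l) ^ 2 / (2 * τ ^ 2))
        = C / τ ^ 2 := by
      rw [hC, Finset.sum_div]
      refine Finset.sum_congr rfl fun k _ => ?_
      rw [Finset.sum_div]
      refine Finset.sum_congr rfl fun l _ => ?_
      field_simp
      try ring
    exact le_trans (le_of_eq heqC) hτsq
  -- N approximates φ on the interval
  have hNφ : ∀ lam ∈ Set.Icc (-T) T, ‖Nf lam - φ lam‖ ≤ 2 * δ := by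
    intro lam hlam
    calc ‖Nf lam - φ lam‖
        = ‖(Nf lam - S lam * (starRingEnd ℂ) (S (-lam)))
            + (S lam * (starRingEnd ℂ) (S (-lam)) - φ lam)‖ := by congr 1; ring
      _ ≤ ‖Nf lam - S lam * (starRingEnd ℂ) (S (-lam))‖
            + ‖S lam * (starRingEnd ℂ) (S (-lam)) - φ lam‖ := norm_add_le _ _
      _ ≤ δ + δ := add_le_add (hNS lam) (hSdiff lam hlam)
      _ = 2 * δ := by ring
  -- positivity of the normalisation
  have hN0 : ‖Nf 0 - 1‖ ≤ 2 * δ := by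
    have := hNφ 0 h0T
    rwa [h0] at this
  have hre : 1/2 ≤ (Nf 0).re := by
    have h1 : |(Nf 0 - 1).re| ≤ ‖Nf 0 - 1‖ := by
      exact Complex.abs_re_le_norm _
    have h2 : (Nf 0 - 1).re = (Nf 0).re - 1 := by simp
    rw [h2] at h1
    have h3 : |(Nf 0).re - 1| ≤ 2 * δ := le_trans h1 hN0
    have h4 := abs_le.1 h3
    linarith [h4.1, hδ14]
  have hpos : 0 < (Nf 0).re := by linarith
  -- apply the realization lemma
  obtain ⟨μ, hμprob, hμchar⟩ := realization c t τ hτpos Nf (fun lam => by rw [hNf]) hpos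
  refine ⟨μ, hμprob, 0, τ, le_of_lt hτpos, fun lam hlam => ?_⟩
  rw [hμchar lam]
  -- final estimate
  set r : ℝ := (Nf 0).re with hr
  have hrpos : 0 < r := hpos
  have hrne : ((r : ℝ) : ℂ) ≠ 0 := by exact_mod_cast hrpos.ne'
  have hr1 : |1 - r| ≤ 2 * δ := by
    have h1 : |(Nf 0).re - 1| ≤ 2 * δ := by
      have h2 : |(Nf 0 - 1).re| ≤ ‖Nf 0 - 1‖ := by
        exact Complex.abs_re_le_norm _
      have h3 : (Nf 0 - 1).re = (Nf 0).re - 1 := by simp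
      rw [h3] at h2
      exact le_trans h2 hN0
    rw [abs_sub_comm]
    exact h1
  have hlamIcc : lam ∈ Set.Icc (-T) T := hKT hlam
  have hNlam : ‖Nf lam - φ lam‖ ≤ 2 * δ := hNφ lam hlamIcc
  have hφlam : ‖φ lam‖ ≤ M := hMb lam hlamIcc
  have hstep : ‖Nf lam / ((r : ℝ) : ℂ) - φ lam‖
      ≤ (‖Nf lam - φ lam‖ + ‖φ lam‖ * |1 - r|) / r := by
    have h1 : Nf lam / ((r : ℝ) : ℂ) - φ lam
        = ((Nf lam - φ lam) + φ lam * ((1 : ℂ) - ((r : ℝ) : ℂ))) / ((r : ℝ) : ℂ) := by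
      field_simp
      ring
    rw [h1, norm_div]
    rw [show ‖((r : ℝ) : ℂ)‖ = r by rw [Complex.norm_real, Real.norm_eq_abs]; exact abs_of_pos hrpos]
    apply (div_le_div_iff_of_pos_right hrpos).2
    calc ‖(Nf lam - φ lam) + φ lam * ((1 : ℂ) - ((r : ℝ) : ℂ))‖
        ≤ ‖Nf lam - φ lam‖ + ‖φ lam * ((1 : ℂ) - ((r : ℝ) : ℂ))‖ := norm_add_le _ _
      _ = ‖Nf lam - φ lam‖ + ‖φ lam‖ * |1 - r| := by
          rw [norm_mul]
          congr 1
          rw [show (1 : ℂ) - ((r : ℝ) : ℂ) = (((1 - r : ℝ)) : ℂ) by push_cast; ring,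
            Complex.norm_real, Real.norm_eq_abs]
  have hQ : ‖Nf lam - φ lam‖ + ‖φ lam‖ * |1 - r| ≤ 2 * δ * (M + 1) := by
    have h5 : ‖φ lam‖ * |1 - r| ≤ M * (2 * δ) :=
      mul_le_mul hφlam hr1 (abs_nonneg _) hMpos.le
    have h6 : 2 * δ + M * (2 * δ) = 2 * δ * (M + 1) := by ring
    linarith
  have h8 : 2 * δ * (M + 1) ≤ ε / 4 := by
    have h9 := mul_le_mul_of_nonneg_left hδε (by positivity : (0:ℝ) ≤ 2 * (M + 1))
    have h10 : 2 * (M + 1) * (ε / (8 * (M + 1))) = ε / 4 := by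
      field_simp
      ring
    have h11 : 2 * δ * (M + 1) = 2 * (M + 1) * δ := by ring
    linarith
  refine lt_of_le_of_lt hstep ?_
  rw [div_lt_iff₀ hrpos]
  have h12 : ε * (1/2) ≤ ε * r := mul_le_mul_of_nonneg_left hre hε.le
  linarith


end
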